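/- Let G₁ and G₂ be finite abelian groups with |G₁| ≥ 2 and |G₂| ≥ 2, and let F : G₁ → G₂ be a function with differential uniformity k = Δ_F. Then the derivative imbalance satisfies NB_F ≥ (|G₂|/(|G₂| − 1))·(k − |G₁|/|G₂|)², as an inequality of rational numbers. -/
import Mathlib


open Finset

/-- `δ_F(a,b) = |{x : F(x+a) - F(x) = b}|`. -/
def deltaF {G₁ G₂ : Type*} [AddCommGroup G₁] [Fintype G₁] [DecidableEq G₁]
    [AddCommGroup G₂] [DecidableEq G₂] (F : G₁ → G₂) (a : G₁) (b : G₂) : ℕ :=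
  (univ.filter fun x => F (x + a) - F x = b).card

/-- The derivative imbalance `NB_F = Σ_{a ≠ 0} Σ_b δ_F(a,b)² − (|G₁|−1)·|G₁|²/|G₂|`. -/
def NB {G₁ G₂ : Type*} [AddCommGroup G₁] [Fintype G₁] [DecidableEq G₁]
    [AddCommGroup G₂] [Fintype G₂] [DecidableEq G₂] (F : G₁ → G₂) : ℚ :=
  (∑ a ∈ univ.filter (fun a : G₁ => a ≠ 0), ∑ b : G₂, (deltaF F a b : ℚ) ^ 2)
    - ((Fintype.card G₁ : ℚ) - 1) * (Fintype.card G₁ : ℚ) ^ 2 / (Fintype.card G₂ : ℚ)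

/-- The differential uniformity `Δ_F = max_{a ≠ 0, b} δ_F(a,b)`. -/
def diffUnif {G₁ G₂ : Type*} [AddCommGroup G₁] [Fintype G₁] [DecidableEq G₁]
    [AddCommGroup G₂] [Fintype G₂] [DecidableEq G₂] (F : G₁ → G₂) : ℕ :=
  (univ.filter (fun a : G₁ => a ≠ 0)).sup fun a => univ.sup fun b : G₂ => deltaF F a b

section aux
variable {G₁ G₂ : Type*} [AddCommGroup G₁] [Fintype G₁] [DecidableEq G₁]
    [AddCommGroup G₂] [Fintype G₂] [DecidableEq G₂]

lemma sum_deltaF (F : G₁ → G₂) (a : G₁) :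
    ∑ b : G₂, (deltaF F a b : ℚ) = (Fintype.card G₁ : ℚ) := by
  have h := Finset.card_eq_sum_card_fiberwise
    (f := fun x : G₁ => F (x + a) - F x) (s := univ) (t := univ) (fun x _ => mem_univ _)
  have : ∑ b : G₂, deltaF F a b = Fintype.card G₁ := by
    rw [Fintype.card, h]; rfl
  exact_mod_cast congrArg (Nat.cast : ℕ → ℚ) this
end aux

theorem NB_lower_bound_diff_uniformity {G₁ G₂ : Type*}
    [AddCommGroup G₁] [Fintype G₁] [DecidableEq G₁]
    [AddCommGroup G₂] [Fintype G₂] [DecidableEq G₂]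
    (h₁ : 2 ≤ Fintype.card G₁) (h₂ : 2 ≤ Fintype.card G₂)
    (F : G₁ → G₂) (k : ℕ) (hk : k = diffUnif F) :
    (Fintype.card G₂ : ℚ) / ((Fintype.card G₂ : ℚ) - 1) *
        ((k : ℚ) - (Fintype.card G₁ : ℚ) / (Fintype.card G₂ : ℚ)) ^ 2 ≤ NB F := by
  
  classical
  set N : ℚ := (Fintype.card G₁ : ℚ) with hN
  set M : ℚ := (Fintype.card G₂ : ℚ) with hM
  have hM1 : (1 : ℚ) < M := by
    have : (2 : ℚ) ≤ M := by rw [hM]; exact_mod_cast h₂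
    linarith
  have hM0 : M ≠ 0 := by positivity
  have hMm1 : M - 1 ≠ 0 := by linarith
  -- the set of nonzero a is nonempty
  have hAne : (univ.filter (fun a : G₁ => a ≠ 0)).Nonempty := by
    obtain ⟨a, ha⟩ := Fintype.exists_ne_of_one_lt_card (by omega) (0 : G₁)
    exact ⟨a, by simp [ha]⟩
  obtain ⟨a₀, ha₀mem, ha₀⟩ := Finset.exists_mem_eq_sup _ hAne
    (fun a => univ.sup fun b : G₂ => deltaF F a b)
  obtain ⟨b₀, _, hb₀⟩ := Finset.exists_mem_eq_sup (univ : Finset G₂)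
    univ_nonempty (fun b : G₂ => deltaF F a₀ b)
  have hkval : (k : ℚ) = (deltaF F a₀ b₀ : ℚ) := by
    rw [hk, diffUnif, ha₀, hb₀]
  -- lower bound for each a
  have hgen : ∀ a : G₁, N ^ 2 / M ≤ ∑ b : G₂, (deltaF F a b : ℚ) ^ 2 := by
    intro a
    have h := sq_sum_le_card_mul_sum_sq (s := (univ : Finset G₂))
      (f := fun b => (deltaF F a b : ℚ))
    rw [sum_deltaF] at h
    rw [div_le_iff₀ (by positivity)]
    calc N ^ 2 ≤ (#(univ : Finset G₂) : ℚ) * ∑ b : G₂, (deltaF F a b : ℚ) ^ 2 := h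
      _ = (∑ b : G₂, (deltaF F a b : ℚ) ^ 2) * M := by
          rw [Finset.card_univ]; ring
  -- stronger bound at a₀
  have ha₀bound : (k : ℚ) ^ 2 + (N - k) ^ 2 / (M - 1)
      ≤ ∑ b : G₂, (deltaF F a₀ b : ℚ) ^ 2 := by
    have hsplit : ∑ b : G₂, (deltaF F a₀ b : ℚ) ^ 2
        = (deltaF F a₀ b₀ : ℚ) ^ 2 + ∑ b ∈ univ.erase b₀, (deltaF F a₀ b : ℚ) ^ 2 :=
      (Finset.add_sum_erase _ _ (mem_univ b₀)).symm
    have hsum' : ∑ b ∈ univ.erase b₀, (deltaF F a₀ b : ℚ) = N - k := by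
      have := (Finset.add_sum_erase (univ : Finset G₂)
        (fun b => (deltaF F a₀ b : ℚ)) (mem_univ b₀)).symm
      rw [sum_deltaF] at this
      rw [hkval]; linarith [this]
    have hcs := sq_sum_le_card_mul_sum_sq (s := (univ : Finset G₂).erase b₀)
      (f := fun b => (deltaF F a₀ b : ℚ))
    rw [hsum'] at hcs
    have hcard : ((#((univ : Finset G₂).erase b₀)) : ℚ) = M - 1 := by
      rw [Finset.card_erase_of_mem (mem_univ b₀), Finset.card_univ]
      have : 1 ≤ Fintype.card G₂ := by omega
      push_cast [Nat.cast_sub this]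
      ring
    rw [hcard] at hcs
    have h2 : (N - k) ^ 2 / (M - 1) ≤ ∑ b ∈ univ.erase b₀, (deltaF F a₀ b : ℚ) ^ 2 := by
      rw [div_le_iff₀ (by linarith)]
      calc (N - k) ^ 2 ≤ (M - 1) * ∑ b ∈ univ.erase b₀, (deltaF F a₀ b : ℚ) ^ 2 := hcs
        _ = _ := by ring
    rw [hsplit, ← hkval]
    linarith
  -- lower bound the full sum
  have hsumbound : (k : ℚ) ^ 2 + (N - k) ^ 2 / (M - 1) - N ^ 2 / M +
      ((N - 1) * N ^ 2 / M)
      ≤ ∑ a ∈ univ.filter (fun a : G₁ => a ≠ 0), ∑ b : G₂, (deltaF F a b : ℚ) ^ 2 := by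
    have hcardA : ((#(univ.filter (fun a : G₁ => a ≠ 0))) : ℚ) = N - 1 := by
      rw [Finset.filter_ne', Finset.card_erase_of_mem (mem_univ 0), Finset.card_univ]
      have : 1 ≤ Fintype.card G₁ := by omega
      push_cast [Nat.cast_sub this]; ring
    have key : ∀ a ∈ univ.filter (fun a : G₁ => a ≠ 0),
        (if a = a₀ then (k : ℚ) ^ 2 + (N - k) ^ 2 / (M - 1) else N ^ 2 / M)
        ≤ ∑ b : G₂, (deltaF F a b : ℚ) ^ 2 := by
      intro a _
      by_cases h : a = a₀
      · simp only [h, if_pos rfl]; exact ha₀bound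
      · simp only [if_neg h]; exact hgen a
    have := Finset.sum_le_sum key
    have hsplit2 : ∑ a ∈ univ.filter (fun a : G₁ => a ≠ 0),
        (if a = a₀ then (k : ℚ) ^ 2 + (N - k) ^ 2 / (M - 1) else N ^ 2 / M)
        = ((k : ℚ) ^ 2 + (N - k) ^ 2 / (M - 1)) +
          ((#(univ.filter (fun a : G₁ => a ≠ 0))) - 1) * (N ^ 2 / M) := by
      rw [← Finset.add_sum_erase _ _ ha₀mem, if_pos rfl]
      congr 1
      rw [Finset.sum_congr rfl (fun a ha => if_neg (Finset.ne_of_mem_erase ha)),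
        Finset.sum_const, Finset.card_erase_of_mem ha₀mem, nsmul_eq_mul]
      have h1 : 1 ≤ #(univ.filter (fun a : G₁ => a ≠ 0)) := Finset.card_pos.2 ⟨a₀, ha₀mem⟩
      rw [Nat.cast_sub h1]
      push_cast
      ring
    rw [hsplit2, hcardA] at this
    have hdiv : (N - 1 - 1) * (N ^ 2 / M) = (N - 1) * N ^ 2 / M - N ^ 2 / M := by ring
    linarith [this]
  -- conclude
  rw [NB]
  have hfinal : M / (M - 1) * ((k : ℚ) - N / M) ^ 2
      = (k : ℚ) ^ 2 + (N - k) ^ 2 / (M - 1) - N ^ 2 / M := by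
    field_simp
    ring
  rw [hfinal]
  have : (N - 1) * N ^ 2 / M = ((Fintype.card G₁ : ℚ) - 1) * (Fintype.card G₁ : ℚ) ^ 2 / (Fintype.card G₂ : ℚ) := rfl
  linarith [hsumbound]
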